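/- Let ω be the permutation of maximal length of S_n. Then Y_ω^{[1,2,…,n]} = Σ_{w ∈ S_n} (−q)^{ℓ(ω)−ℓ(w)} T_w and Y_ω^{[n,n−1,…,1]} = Σ_{w ∈ S_n} q^{ℓ(w)−ℓ(ω)} T_w. -/

import Mathlib

open scoped BigOperators
open Finset

namespace HeckePaper

noncomputable section

/-- The Coxeter length of a permutation of `Fin n`, i.e. its number of inversions. -/
def len {n : ℕ} (w : Equiv.Perm (Fin n)) : ℕ :=
  (Finset.univ.filter fun p : Fin n × Fin n => p.1 < p.2 ∧ w p.2 < w p.1).card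

/-- The adjacent transposition exchanging `i` and `i+1` (`0`-based), i.e. the
Coxeter generator `s_{i+1} = T_{i+1}` in the (1-based) notation of the paper;
defined to be `1` when out of range. -/
def adj (n i : ℕ) : Equiv.Perm (Fin n) :=
  if h : i + 1 < n then Equiv.swap ⟨i, by omega⟩ ⟨i + 1, h⟩ else 1

/-- The q-integer `[k] = (q^k - q^{-k})/(q - q⁻¹) = q^{k-1} + q^{k-3} + ⋯ + q^{1-k}`. -/
def qint {R : Type} [CommRing R] (q : Rˣ) (k : ℤ) : R :=
  if 0 ≤ k then ∑ j ∈ Finset.range k.toNat, ((q ^ (k - 1 - 2 * (j : ℤ)) : Rˣ) : R)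
  else - ∑ j ∈ Finset.range (-k).toNat, ((q ^ (-k - 1 - 2 * (j : ℤ)) : Rˣ) : R)

/-- `Q = q - q⁻¹`. -/
def Qv (R : Type) [CommRing R] (q : Rˣ) : R := (q : R) - ((q⁻¹ : Rˣ) : R)

/-- A realization of the Hecke algebra `H_n` of the symmetric group `S_n` over `R`:
an `R`-algebra `H` with a basis `{T_w : w ∈ S_n}` such that `T_u T_v = T_{uv}`
whenever lengths add, and the Hecke quadratic relations
`T_i² = (q - q⁻¹) T_i + 1` hold for the generators. -/
structure HeckeAlgebra (n : ℕ) (R : Type) [CommRing R] (q : Rˣ) (H : Type)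
    [Ring H] [Algebra R H] where
  T : Equiv.Perm (Fin n) → H
  basis : Module.Basis (Equiv.Perm (Fin n)) R H
  basis_eq : ∀ w, basis w = T w
  T_one : T 1 = 1
  T_mul : ∀ u v : Equiv.Perm (Fin n), len (u * v) = len u + len v →
    T u * T v = T (u * v)
  T_sq : ∀ i : ℕ, i + 1 < n →
    T (adj n i) * T (adj n i) = Qv R q • T (adj n i) + 1

/-- The Young subgroup `S_I` of `S_n` associated with a composition `I` of `n`:
permutations preserving each block of the composition. -/
def youngSubgroup {n : ℕ} (c : Composition n) : Subgroup (Equiv.Perm (Fin n)) where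
  carrier := {w | ∀ i, c.index (w i) = c.index i}
  one_mem' := fun _ => rfl
  mul_mem' := by
    intro a b ha hb i
    have hb' := hb i
    have ha' := ha (b i)
    simpa [Equiv.Perm.mul_apply, hb'] using ha'
  inv_mem' := by
    intro a ha i
    have := ha (a⁻¹ i)
    simpa using this.symm

/-- `w` is the minimal-length representative of its coset `w·S_I`. -/
def IsMinCosetRep {n : ℕ} (c : Composition n) (w : Equiv.Perm (Fin n)) : Prop :=
  ∀ u ∈ youngSubgroup c, len w ≤ len (w * u)

/-- `w` is of maximal length in its coset `w·S_I`. -/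
def IsMaxCosetRep {n : ℕ} (c : Composition n) (w : Equiv.Perm (Fin n)) : Prop :=
  ∀ u ∈ youngSubgroup c, len (w * u) ≤ len w

/-- The set of minimal-length representatives of the cosets `S_n/S_I`. -/
def minCosetReps {n : ℕ} (c : Composition n) : Finset (Equiv.Perm (Fin n)) :=
  @Finset.filter _ (IsMinCosetRep c) (Classical.decPred _) Finset.univ

/-- The word `[a+m-2, …, a+1, a]` (so that the corresponding product of adjacent
transpositions is the block cyclic permutation `ζ_m` shifted by `a`). -/
def zetaWordBlock (a m : ℕ) : List ℕ := (List.range (m - 1)).reverse.map (a + ·)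

/-- The reduced word of the permutation `w_J` (whose Hecke element is `ζ_J`),
for a composition `J` of `n`. -/
def zetaWord {n : ℕ} (c : Composition n) : List ℕ :=
  (List.ofFn fun k : Fin c.length =>
    zetaWordBlock (c.sizeUpTo k) (c.blocksFun k)).flatten

/-- The permutation `w_J`, a minimal-length representative of the conjugacy
class corresponding to the composition `J`; `ζ_J = T_{w_J}`. -/
def zetaPerm {n : ℕ} (c : Composition n) : Equiv.Perm (Fin n) :=
  ((zetaWord c).map (adj n)).prod

/-- The composition of `n` obtained by sorting the parts of a partition of `n`
in decreasing order. -/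
def partComp {n : ℕ} (μ : n.Partition) : Composition n where
  blocks := μ.parts.sort (· ≥ ·)
  blocks_pos := by
    intro i hi
    exact μ.parts_pos (by rwa [Multiset.mem_sort] at hi)
  blocks_sum := by
    have h : ((μ.parts.sort (· ≥ ·) : List ℕ) : Multiset ℕ) = μ.parts :=
      Multiset.sort_eq _ _
    calc (μ.parts.sort (· ≥ ·)).sum
        = ((μ.parts.sort (· ≥ ·) : List ℕ) : Multiset ℕ).sum := by
          rw [Multiset.sum_coe]
      _ = μ.parts.sum := by rw [h]
      _ = n := μ.parts_sum

/-- `m` is a partial sum `j_1 + ⋯ + j_k` of the composition `J`. -/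
def IsPartialSum {n : ℕ} (c : Composition n) (m : ℕ) : Prop :=
  ∃ k ≤ c.length, c.sizeUpTo k = m

/-- `w` has a recoil at `a` (0-based; i.e. at `i = a+1` in the 1-based notation of
the paper): the value `a+1` occurs to the left of the value `a` in the one-line
word of `w`. -/
def Recoil {n : ℕ} (w : Equiv.Perm (Fin n)) (a : ℕ) : Prop :=
  ∀ h : a + 1 < n, w⁻¹ ⟨a + 1, h⟩ < w⁻¹ ⟨a, by omega⟩

namespace HeckeAlgebra

variable {n : ℕ} {R : Type} [CommRing R] {q : Rˣ} {H : Type} [Ring H] [Algebra R H]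
variable (𝒜 : HeckeAlgebra n R q H)

/-- The scalar product on `H_n` for which the basis `{T_w}` is orthonormal. -/
def scalar (x y : H) : R :=
  ∑ w : Equiv.Perm (Fin n), 𝒜.basis.repr x w * 𝒜.basis.repr y w

/-- The normalization map `N_I : H(S_I) → H_n`,
`h ↦ Σ_w T_w h T_{w⁻¹}` (sum over the minimal-length coset representatives of
`S_n/S_I`). -/
def norm (c : Composition n) (h : H) : H :=
  ∑ w ∈ minCosetReps c, 𝒜.T w * h * 𝒜.T w⁻¹

/-- The product `T_{a_1} T_{a_2} ⋯` in the Hecke algebra associated with a word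
(list of 0-based indices of the generators). -/
def wordT (l : List ℕ) : H := (l.map fun a => 𝒜.T (adj n a)).prod

/-- The Hecke element `ζ_J = T_{w_J}` of a composition `J`. -/
def zeta (c : Composition n) : H := 𝒜.T (zetaPerm c)

end HeckeAlgebra


/-- The family `{Y_w}` is the Yang–Baxter family associated with the spectral
vector `v`: `Y_1 = 1` and `Y_{w·sᵢ} = Y_w · (T_i − q^k/[k])` whenever
`ℓ(w·sᵢ) = ℓ(w) + 1`, where `k = v_{w(i+1)} − v_{w(i)}`. -/
def IsYangBaxterFamily {n : ℕ} {R : Type} [CommRing R] {q : Rˣ} {H : Type}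
    [Ring H] [Algebra R H] (𝒜 : HeckeAlgebra n R q H)
    (v : Fin n → ℤ) (inv : ℤ → R) (Y : Equiv.Perm (Fin n) → H) : Prop :=
  Y 1 = 1 ∧
  ∀ (w : Equiv.Perm (Fin n)) (i : ℕ) (h : i + 1 < n),
    len (w * adj n i) = len w + 1 →
    Y (w * adj n i) = Y w * (𝒜.T (adj n i) -
      algebraMap R H
        (((q ^ (v (w ⟨i + 1, h⟩) - v (w ⟨i, by omega⟩)) : Rˣ) : R) *
          inv (v (w ⟨i + 1, h⟩) - v (w ⟨i, by omega⟩))))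

section scratchvars
variable {n : ℕ}

lemma adj_eq {i : ℕ} (h : i + 1 < n) :
    adj n i = Equiv.swap ⟨i, by omega⟩ ⟨i + 1, h⟩ := by
  simp [adj, h]

lemma swap_lt {a b x y : Fin n} (hab : (b : ℕ) = (a : ℕ) + 1) (hxy : x < y)
    (hne : ¬(x = a ∧ y = b)) : Equiv.swap a b x < Equiv.swap a b y := by
  simp only [Equiv.swap_apply_def]
  split_ifs <;>
    (simp only [Fin.ext_iff, Fin.lt_def, not_and] at *) <;> omega

lemma adj_mul_self (i : ℕ) : adj n i * adj n i = 1 := by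
  unfold adj; split_ifs with h
  · exact Equiv.swap_mul_self _ _
  · simp

lemma adj_apply_fst {i : ℕ} (h : i + 1 < n) : adj n i ⟨i, by omega⟩ = ⟨i + 1, h⟩ := by
  rw [adj_eq h]; exact Equiv.swap_apply_left _ _

lemma adj_apply_snd {i : ℕ} (h : i + 1 < n) : adj n i ⟨i + 1, h⟩ = ⟨i, by omega⟩ := by
  rw [adj_eq h]; exact Equiv.swap_apply_right _ _

lemma len_one : len (1 : Equiv.Perm (Fin n)) = 0 := by
  unfold len
  rw [Finset.card_eq_zero, Finset.filter_eq_empty_iff]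
  rintro p - ⟨h1, h2⟩
  simp only [Equiv.Perm.one_apply] at h2
  exact absurd h2 (not_lt.mpr h1.le)

lemma len_mul_adj {w : Equiv.Perm (Fin n)} {i : ℕ} (h : i + 1 < n)
    (hasc : w ⟨i, by omega⟩ < w ⟨i + 1, h⟩) :
    len (w * adj n i) = len w + 1 := by
  classical
  set a : Fin n := ⟨i, by omega⟩ with ha
  set b : Fin n := ⟨i + 1, h⟩ with hb
  have hab : (b : ℕ) = (a : ℕ) + 1 := rfl
  have hltab : a < b := by simp [Fin.lt_def, ha, hb]
  have hadj : adj n i = Equiv.swap a b := adj_eq h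
  have hss : ∀ x, Equiv.swap a b (Equiv.swap a b x) = x := fun x => Equiv.swap_apply_self a b x
  have himg : (Finset.univ.filter fun p : Fin n × Fin n =>
        p.1 < p.2 ∧ (w * adj n i) p.2 < (w * adj n i) p.1)
      = insert (a, b) ((Finset.univ.filter fun p : Fin n × Fin n =>
          p.1 < p.2 ∧ w p.2 < w p.1).image fun p => (Equiv.swap a b p.1, Equiv.swap a b p.2)) := by
    ext p
    simp only [Finset.mem_insert, Finset.mem_image, Finset.mem_filter, Finset.mem_univ, true_and,
      Equiv.Perm.mul_apply, hadj]
    constructor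
    · rintro ⟨hp, hw⟩
      by_cases hpe : p = (a, b)
      · exact Or.inl hpe
      · refine Or.inr ⟨(Equiv.swap a b p.1, Equiv.swap a b p.2), ⟨?_, hw⟩, ?_⟩
        · refine swap_lt hab hp ?_
          rintro ⟨h1, h2⟩
          exact hpe (Prod.ext h1 h2)
        · simp [hss]
    · rintro (rfl | ⟨u, ⟨hu, hwu⟩, rfl⟩)
      · refine ⟨hltab, ?_⟩
        rw [Equiv.swap_apply_left, Equiv.swap_apply_right]
        exact hasc
      · refine ⟨?_, by simpa [hss] using hwu⟩
        refine swap_lt hab hu ?_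
        rintro ⟨h1, h2⟩
        rw [h1, h2] at hwu
        exact absurd hwu (not_lt.mpr hasc.le)
  have hinj : Function.Injective fun p : Fin n × Fin n =>
      (Equiv.swap a b p.1, Equiv.swap a b p.2) := by
    intro p1 p2 hp
    have h1 := congrArg Prod.fst hp
    have h2 := congrArg Prod.snd hp
    simp only at h1 h2
    exact Prod.ext ((Equiv.swap a b).injective h1) ((Equiv.swap a b).injective h2)
  have hnm : (a, b) ∉ (Finset.univ.filter fun p : Fin n × Fin n =>
      p.1 < p.2 ∧ w p.2 < w p.1).image fun p => (Equiv.swap a b p.1, Equiv.swap a b p.2) := by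
    rw [Finset.mem_image]
    rintro ⟨u, hu, hpe⟩
    have h1 : Equiv.swap a b u.1 = a := congrArg Prod.fst hpe
    have h2 : Equiv.swap a b u.2 = b := congrArg Prod.snd hpe
    have hu1 : u.1 = b := by
      have := congrArg (Equiv.swap a b) h1; rwa [hss, Equiv.swap_apply_left] at this
    have hu2 : u.2 = a := by
      have := congrArg (Equiv.swap a b) h2; rwa [hss, Equiv.swap_apply_right] at this
    rw [Finset.mem_filter] at hu
    have := hu.2.1
    rw [hu1, hu2] at this
    exact absurd this (not_lt.mpr hltab.le)
  unfold len
  rw [himg, Finset.card_insert_of_notMem hnm, Finset.card_image_of_injective _ hinj]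

lemma len_adj {i : ℕ} (h : i + 1 < n) : len (adj n i) = 1 := by
  have := len_mul_adj (w := 1) h (by simp [Fin.lt_def])
  rwa [one_mul, len_one, zero_add] at this

lemma len_mul_adj_desc {w : Equiv.Perm (Fin n)} {i : ℕ} (h : i + 1 < n)
    (hdesc : w ⟨i + 1, h⟩ < w ⟨i, by omega⟩) :
    len (w * adj n i) + 1 = len w := by
  have hasc : (w * adj n i) ⟨i, by omega⟩ < (w * adj n i) ⟨i + 1, h⟩ := by
    simp only [Equiv.Perm.mul_apply]
    rw [adj_apply_fst h, adj_apply_snd h]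
    exact hdesc
  have := len_mul_adj h hasc
  rw [mul_assoc, adj_mul_self, mul_one] at this
  exact this.symm

lemma fin_adj_ne {i : ℕ} (h : i + 1 < n) :
    (⟨i, by omega⟩ : Fin n) ≠ ⟨i + 1, h⟩ := by
  simp [Fin.ext_iff]

lemma len_mul_adj_ge {u : Equiv.Perm (Fin n)} {i : ℕ} (h : i + 1 < n) :
    len u ≤ len (u * adj n i) + 1 := by
  rcases lt_trichotomy (u ⟨i, by omega⟩) (u ⟨i + 1, h⟩) with hlt | heq | hgt
  · rw [len_mul_adj h hlt]; omega
  · exact absurd (u.injective heq) (fin_adj_ne h)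
  · exact le_of_eq (len_mul_adj_desc h hgt).symm

lemma mul_adj_eq_iff {i : ℕ} {v u : Equiv.Perm (Fin n)} :
    v * adj n i = u ↔ v = u * adj n i := by
  constructor
  · rintro rfl; rw [mul_assoc, adj_mul_self, mul_one]
  · rintro rfl; rw [mul_assoc, adj_mul_self, mul_one]

lemma mul_adj_ne {i : ℕ} (h : i + 1 < n) (u : Equiv.Perm (Fin n)) : u * adj n i ≠ u := by
  intro he
  have hadj : adj n i = 1 := mul_left_cancel (a := u) (by rw [he, mul_one])
  have h2 := congrArg (fun f : Equiv.Perm (Fin n) => f ⟨i, by omega⟩) hadj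
  simp only [Equiv.Perm.one_apply] at h2
  rw [adj_apply_fst h] at h2
  exact (fin_adj_ne h) h2.symm

lemma perm_eq_one_of_strictMono {w : Equiv.Perm (Fin n)} (hw : StrictMono w) : w = 1 := by
  have he : (StrictMono.orderIsoOfSurjective w hw w.surjective) = OrderIso.refl (Fin n) :=
    Subsingleton.elim _ _
  refine Equiv.ext fun x => ?_
  have h1 : (StrictMono.orderIsoOfSurjective w hw w.surjective) x = x := by rw [he]; rfl
  rw [StrictMono.coe_orderIsoOfSurjective] at h1
  simpa using h1

lemma strictMono_of_ascents {w : Equiv.Perm (Fin n)}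
    (hstep : ∀ (j : ℕ) (hj : j + 1 < n), w ⟨j, by omega⟩ < w ⟨j + 1, hj⟩) :
    StrictMono w := by
  have key : ∀ (k : ℕ) (a b : Fin n), (b : ℕ) = (a : ℕ) + k + 1 → w a < w b := by
    intro k
    induction k with
    | zero =>
      intro a b hb
      have hbl := b.isLt
      have hj : (a : ℕ) + 1 < n := by omega
      have h1 : b = ⟨(a : ℕ) + 1, hj⟩ := Fin.ext (show (b : ℕ) = (a : ℕ) + 1 by omega)
      rw [h1]
      exact hstep (a : ℕ) hj
    | succ k ih =>
      intro a b hb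
      have hbl := b.isLt
      have hm : (a : ℕ) + k + 1 < n := by omega
      have h1 : w a < w ⟨(a : ℕ) + k + 1, hm⟩ := ih a _ rfl
      have hj : ((a : ℕ) + k + 1) + 1 < n := by omega
      have h2 : w ⟨(a : ℕ) + k + 1, hm⟩ < w b := by
        have hb2 : b = ⟨(a : ℕ) + k + 1 + 1, hj⟩ :=
          Fin.ext (show (b : ℕ) = (a : ℕ) + k + 1 + 1 by omega)
        rw [hb2]
        exact hstep _ hj
      exact h1.trans h2
  intro a b hab
  have h1 := Fin.lt_def.mp hab
  exact key ((b : ℕ) - (a : ℕ) - 1) a b (by omega)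

lemma eq_rev_of_descents {w : Equiv.Perm (Fin n)}
    (hstep : ∀ (j : ℕ) (hj : j + 1 < n), w ⟨j + 1, hj⟩ < w ⟨j, by omega⟩) :
    w = Fin.revPerm := by
  have key : ∀ (k : ℕ) (a b : Fin n), (b : ℕ) = (a : ℕ) + k + 1 → w b < w a := by
    intro k
    induction k with
    | zero =>
      intro a b hb
      have hbl := b.isLt
      have hj : (a : ℕ) + 1 < n := by omega
      have h1 : b = ⟨(a : ℕ) + 1, hj⟩ := Fin.ext (show (b : ℕ) = (a : ℕ) + 1 by omega)
      rw [h1]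
      exact hstep (a : ℕ) hj
    | succ k ih =>
      intro a b hb
      have hbl := b.isLt
      have hm : (a : ℕ) + k + 1 < n := by omega
      have h1 : w ⟨(a : ℕ) + k + 1, hm⟩ < w a := ih a _ rfl
      have hj : ((a : ℕ) + k + 1) + 1 < n := by omega
      have h2 : w b < w ⟨(a : ℕ) + k + 1, hm⟩ := by
        have hb2 : b = ⟨(a : ℕ) + k + 1 + 1, hj⟩ :=
          Fin.ext (show (b : ℕ) = (a : ℕ) + k + 1 + 1 by omega)
        rw [hb2]
        exact hstep _ hj
      exact h2.trans h1
  have hmono : StrictMono (w * Fin.revPerm : Equiv.Perm (Fin n)) := by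
    intro a b hab
    simp only [Equiv.Perm.mul_apply]
    have h1 : Fin.revPerm b < Fin.revPerm a := by
      show b.rev < a.rev
      exact Fin.rev_lt_rev.mpr hab
    have h2 := Fin.lt_def.mp h1
    exact key (((Fin.revPerm a : Fin n) : ℕ) - ((Fin.revPerm b : Fin n) : ℕ) - 1)
      (Fin.revPerm b) (Fin.revPerm a) (by omega)
  have h1 := perm_eq_one_of_strictMono hmono
  have hrr : (Fin.revPerm : Equiv.Perm (Fin n)) * Fin.revPerm = 1 := by
    ext x
    simp [Equiv.Perm.mul_apply]
  calc w = w * Fin.revPerm * Fin.revPerm := by rw [mul_assoc, hrr, mul_one]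
    _ = 1 * Fin.revPerm := by rw [h1]
    _ = Fin.revPerm := one_mul _

lemma exists_descent {w : Equiv.Perm (Fin n)} (hw : w ≠ 1) :
    ∃ (i : ℕ) (h : i + 1 < n), w ⟨i + 1, h⟩ < w ⟨i, by omega⟩ := by
  by_contra hc
  push_neg at hc
  apply hw
  apply perm_eq_one_of_strictMono
  apply strictMono_of_ascents
  intro j hj
  refine (hc j hj).lt_of_ne fun he => ?_
  exact (fin_adj_ne hj) (w.injective he)

lemma exists_ascent {w : Equiv.Perm (Fin n)} (hw : w ≠ Fin.revPerm) :
    ∃ (i : ℕ) (h : i + 1 < n), w ⟨i, by omega⟩ < w ⟨i + 1, h⟩ := by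
  by_contra hc
  push_neg at hc
  apply hw
  apply eq_rev_of_descents
  intro j hj
  refine (hc j hj).lt_of_ne fun he => ?_
  exact (fin_adj_ne hj) (w.injective he).symm

lemma len_le_rev (w : Equiv.Perm (Fin n)) :
    len w ≤ len (Fin.revPerm : Equiv.Perm (Fin n)) := by
  unfold len
  apply Finset.card_le_card
  intro p hp
  rw [Finset.mem_filter] at hp ⊢
  refine ⟨hp.1, hp.2.1, ?_⟩
  show (p.2).rev < (p.1).rev
  exact Fin.rev_lt_rev.mpr hp.2.1

lemma len_lt_rev {w : Equiv.Perm (Fin n)} (hw : w ≠ Fin.revPerm) :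
    len w < len (Fin.revPerm : Equiv.Perm (Fin n)) := by
  obtain ⟨i, h, hasc⟩ := exists_ascent hw
  unfold len
  apply Finset.card_lt_card
  rw [Finset.ssubset_iff_of_subset]
  · refine ⟨(⟨i, by omega⟩, ⟨i + 1, h⟩), ?_, ?_⟩
    · rw [Finset.mem_filter]
      refine ⟨Finset.mem_univ _, by simp [Fin.lt_def], ?_⟩
      show (⟨i + 1, h⟩ : Fin n).rev < (⟨i, by omega⟩ : Fin n).rev
      exact Fin.rev_lt_rev.mpr (by simp [Fin.lt_def])
    · rw [Finset.mem_filter]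
      rintro ⟨-, -, h2⟩
      exact absurd h2 (not_lt.mpr hasc.le)
  · intro p hp
    rw [Finset.mem_filter] at hp ⊢
    refine ⟨hp.1, hp.2.1, ?_⟩
    show (p.2).rev < (p.1).rev
    exact Fin.rev_lt_rev.mpr hp.2.1

end scratchvars

section AlgAux
variable {n : ℕ} {R : Type} [CommRing R] {q : Rˣ} {H : Type} [Ring H] [Algebra R H]
variable (𝒜 : HeckeAlgebra n R q H)

lemma mul_algebraMap_eq (y : H) (r : R) : y * algebraMap R H r = r • y :=
  ((Algebra.commutes r y).symm).trans (Algebra.smul_def r y).symm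

lemma T_mul_adj_eq (u : Equiv.Perm (Fin n)) (i : ℕ) (h : i + 1 < n) :
    𝒜.T u * 𝒜.T (adj n i) = 𝒜.T (u * adj n i) +
      (if u ⟨i + 1, h⟩ < u ⟨i, by omega⟩ then Qv R q • 𝒜.T u else 0) := by
  rcases lt_trichotomy (u ⟨i, by omega⟩) (u ⟨i + 1, h⟩) with hlt | heq | hgt
  · rw [if_neg (not_lt.mpr hlt.le), add_zero]
    apply 𝒜.T_mul
    rw [len_mul_adj h hlt, len_adj h]
  · exact absurd (u.injective heq) (fin_adj_ne h)
  · rw [if_pos hgt]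
    have hWW : (u * adj n i) * adj n i = u := by rw [mul_assoc, adj_mul_self, mul_one]
    have hasc : (u * adj n i) ⟨i, by omega⟩ < (u * adj n i) ⟨i + 1, h⟩ := by
      simp only [Equiv.Perm.mul_apply]
      rw [adj_apply_fst h, adj_apply_snd h]
      exact hgt
    have hTu : 𝒜.T (u * adj n i) * 𝒜.T (adj n i) = 𝒜.T u := by
      rw [𝒜.T_mul _ _ (by rw [len_mul_adj h hasc, len_adj h]), hWW]
    calc 𝒜.T u * 𝒜.T (adj n i)
        = 𝒜.T (u * adj n i) * (𝒜.T (adj n i) * 𝒜.T (adj n i)) := by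
          rw [← mul_assoc, hTu]
      _ = 𝒜.T (u * adj n i) * (Qv R q • 𝒜.T (adj n i) + 1) := by rw [𝒜.T_sq i h]
      _ = Qv R q • (𝒜.T (u * adj n i) * 𝒜.T (adj n i)) + 𝒜.T (u * adj n i) := by
          rw [mul_add, mul_one, mul_smul_comm]
      _ = 𝒜.T (u * adj n i) + Qv R q • 𝒜.T u := by rw [hTu, add_comm]

lemma repr_mul_T (i : ℕ) (h : i + 1 < n) (u : Equiv.Perm (Fin n)) (x : H) :
    𝒜.basis.repr (x * 𝒜.T (adj n i)) u =
      𝒜.basis.repr x (u * adj n i) +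
        (if u ⟨i + 1, h⟩ < u ⟨i, by omega⟩ then Qv R q else 0) * 𝒜.basis.repr x u := by
  classical
  have key : ((Finsupp.lapply u).comp (𝒜.basis.repr.toLinearMap.comp
        (LinearMap.mulRight R (𝒜.T (adj n i)))))
      = (Finsupp.lapply (u * adj n i)).comp 𝒜.basis.repr.toLinearMap +
        (if u ⟨i + 1, h⟩ < u ⟨i, by omega⟩ then Qv R q else 0) •
          ((Finsupp.lapply u).comp 𝒜.basis.repr.toLinearMap) := by
    apply 𝒜.basis.ext
    intro v
    simp only [LinearMap.comp_apply, LinearMap.mulRight_apply, LinearMap.add_apply,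
      LinearMap.smul_apply, Finsupp.lapply_apply, LinearEquiv.coe_toLinearMap, smul_eq_mul]
    rw [𝒜.basis_eq v, T_mul_adj_eq 𝒜 v i h, ← 𝒜.basis_eq v, ← 𝒜.basis_eq (v * adj n i)]
    rw [map_add, Finsupp.add_apply, 𝒜.basis.repr_self, apply_ite (𝒜.basis.repr),
      map_smul, map_zero, 𝒜.basis.repr_self]
    rw [apply_ite (fun f : (Equiv.Perm (Fin n)) →₀ R => f u), Finsupp.smul_apply,
      Finsupp.coe_zero, Pi.zero_apply]
    rw [Finsupp.single_apply, Finsupp.single_apply, Finsupp.single_apply, smul_eq_mul]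
    by_cases hvu : v = u
    · subst hvu
      rw [if_neg (fun hh : v * adj n i = v => mul_adj_ne h v hh),
        if_neg (fun hh : v = v * adj n i => mul_adj_ne h v hh.symm), if_pos rfl]
      split_ifs <;> ring
    · rw [if_neg hvu]
      have hcond : (v * adj n i = u) ↔ (v = u * adj n i) := mul_adj_eq_iff
      by_cases hva : v * adj n i = u
      · rw [if_pos hva, if_pos (hcond.mp hva)]
        split_ifs <;> ring
      · rw [if_neg hva, if_neg (fun hh => hva (hcond.mpr hh))]
        split_ifs <;> ring
  have := LinearMap.congr_fun key x
  simp only [LinearMap.comp_apply, LinearMap.mulRight_apply, LinearMap.add_apply,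
    LinearMap.smul_apply, Finsupp.lapply_apply, LinearEquiv.coe_toLinearMap,
    smul_eq_mul] at this
  exact this

end AlgAux

section AlgAux2
variable {n : ℕ} {R : Type} [CommRing R] {q : Rˣ} {H : Type} [Ring H] [Algebra R H]
variable (𝒜 : HeckeAlgebra n R q H)

lemma repr_Y (v : Fin n → ℤ) (inv : ℤ → R) (Y : Equiv.Perm (Fin n) → H)
    (hY : IsYangBaxterFamily 𝒜 v inv Y) :
    ∀ w : Equiv.Perm (Fin n), 𝒜.basis.repr (Y w) w = 1 ∧
      ∀ u, len w < len u → 𝒜.basis.repr (Y w) u = 0 := by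
  suffices hm : ∀ (m : ℕ) (w : Equiv.Perm (Fin n)), len w = m →
      𝒜.basis.repr (Y w) w = 1 ∧ ∀ u, len w < len u → 𝒜.basis.repr (Y w) u = 0 from
    fun w => hm (len w) w rfl
  intro m
  induction m using Nat.strong_induction_on with
  | _ m ih =>
  intro w hw
  by_cases hw1 : w = 1
  · subst hw1
    rw [hY.1]
    have h1 : (1 : H) = 𝒜.basis 1 := by rw [𝒜.basis_eq, 𝒜.T_one]
    constructor
    · rw [h1, 𝒜.basis.repr_self, Finsupp.single_apply, if_pos rfl]
    · intro u hu
      rw [h1, 𝒜.basis.repr_self, Finsupp.single_apply, if_neg]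
      intro he
      rw [← he] at hu
      exact lt_irrefl _ hu
  · obtain ⟨i, h, hdesc⟩ := exists_descent hw1
    have hWW : (w * adj n i) * adj n i = w := by rw [mul_assoc, adj_mul_self, mul_one]
    have hlen' : len (w * adj n i) + 1 = len w := len_mul_adj_desc h hdesc
    obtain ⟨c, hrec⟩ : ∃ c : R,
        Y w = Y (w * adj n i) * (𝒜.T (adj n i) - algebraMap R H c) := by
      have h2 := hY.2 (w * adj n i) i h (by rw [hWW]; omega)
      rw [hWW] at h2
      exact ⟨_, h2⟩
    have hYw : Y w = Y (w * adj n i) * 𝒜.T (adj n i) - c • Y (w * adj n i) := by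
      rw [hrec, mul_sub, mul_algebraMap_eq]
    have ih' := ih (len (w * adj n i)) (by omega) (w * adj n i) rfl
    have hrepr : ∀ u' : Equiv.Perm (Fin n), 𝒜.basis.repr (Y w) u' =
        𝒜.basis.repr (Y (w * adj n i)) (u' * adj n i) +
          (if u' ⟨i + 1, h⟩ < u' ⟨i, by omega⟩ then Qv R q else 0) *
            𝒜.basis.repr (Y (w * adj n i)) u'
          - c * 𝒜.basis.repr (Y (w * adj n i)) u' := by
      intro u'
      rw [hYw, map_sub, Finsupp.sub_apply, repr_mul_T 𝒜 i h u', map_smul,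
        Finsupp.smul_apply, smul_eq_mul]
    constructor
    · rw [hrepr w]
      have h0 : 𝒜.basis.repr (Y (w * adj n i)) w = 0 := ih'.2 w (by omega)
      have h1 : 𝒜.basis.repr (Y (w * adj n i)) (w * adj n i) = 1 := ih'.1
      rw [h0, h1]
      ring
    · intro u hu
      rw [hrepr u]
      have hge : len u ≤ len (u * adj n i) + 1 := len_mul_adj_ge h
      have h1 : 𝒜.basis.repr (Y (w * adj n i)) (u * adj n i) = 0 := ih'.2 _ (by omega)
      have h2 : 𝒜.basis.repr (Y (w * adj n i)) u = 0 := ih'.2 u (by omega)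
      rw [h1, h2]
      ring

lemma factor_zero_left (i : ℕ) (h : i + 1 < n) :
    (𝒜.T (adj n i) - algebraMap R H (q : R)) *
      (𝒜.T (adj n i) + algebraMap R H ((q⁻¹ : Rˣ) : R)) = 0 := by
  have hsq : 𝒜.T (adj n i) * 𝒜.T (adj n i) = algebraMap R H (Qv R q) * 𝒜.T (adj n i) + 1 := by
    rw [𝒜.T_sq i h, Algebra.smul_def]
  have hqq : algebraMap R H (q : R) * algebraMap R H ((q⁻¹ : Rˣ) : R) = 1 := by
    rw [← map_mul, Units.mul_inv, map_one]
  have hcomm : ∀ r : R, 𝒜.T (adj n i) * algebraMap R H r = algebraMap R H r * 𝒜.T (adj n i) :=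
    fun r => (Algebra.commutes r _).symm
  calc (𝒜.T (adj n i) - algebraMap R H (q : R)) *
      (𝒜.T (adj n i) + algebraMap R H ((q⁻¹ : Rˣ) : R))
      = 𝒜.T (adj n i) * 𝒜.T (adj n i) + 𝒜.T (adj n i) * algebraMap R H ((q⁻¹ : Rˣ) : R)
        - algebraMap R H (q : R) * 𝒜.T (adj n i)
        - algebraMap R H (q : R) * algebraMap R H ((q⁻¹ : Rˣ) : R) := by noncomm_ring
    _ = (algebraMap R H (Qv R q) * 𝒜.T (adj n i) + 1)
        + algebraMap R H ((q⁻¹ : Rˣ) : R) * 𝒜.T (adj n i)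
        - algebraMap R H (q : R) * 𝒜.T (adj n i) - 1 := by rw [hsq, hcomm, hqq]
    _ = algebraMap R H (Qv R q + ((q⁻¹ : Rˣ) : R) - (q : R)) * 𝒜.T (adj n i) := by
        rw [map_sub, map_add]; noncomm_ring
    _ = 0 := by
        have hz : Qv R q + ((q⁻¹ : Rˣ) : R) - (q : R) = 0 := by unfold Qv; ring
        rw [hz, map_zero, zero_mul]

lemma factor_zero_right (i : ℕ) (h : i + 1 < n) :
    (𝒜.T (adj n i) + algebraMap R H ((q⁻¹ : Rˣ) : R)) *
      (𝒜.T (adj n i) - algebraMap R H (q : R)) = 0 := by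
  have hsq : 𝒜.T (adj n i) * 𝒜.T (adj n i) = algebraMap R H (Qv R q) * 𝒜.T (adj n i) + 1 := by
    rw [𝒜.T_sq i h, Algebra.smul_def]
  have hqq : algebraMap R H ((q⁻¹ : Rˣ) : R) * algebraMap R H (q : R) = 1 := by
    rw [← map_mul, Units.inv_mul, map_one]
  have hcomm : ∀ r : R, 𝒜.T (adj n i) * algebraMap R H r = algebraMap R H r * 𝒜.T (adj n i) :=
    fun r => (Algebra.commutes r _).symm
  calc (𝒜.T (adj n i) + algebraMap R H ((q⁻¹ : Rˣ) : R)) *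
      (𝒜.T (adj n i) - algebraMap R H (q : R))
      = 𝒜.T (adj n i) * 𝒜.T (adj n i) - 𝒜.T (adj n i) * algebraMap R H (q : R)
        + algebraMap R H ((q⁻¹ : Rˣ) : R) * 𝒜.T (adj n i)
        - algebraMap R H ((q⁻¹ : Rˣ) : R) * algebraMap R H (q : R) := by noncomm_ring
    _ = (algebraMap R H (Qv R q) * 𝒜.T (adj n i) + 1)
        - algebraMap R H (q : R) * 𝒜.T (adj n i)
        + algebraMap R H ((q⁻¹ : Rˣ) : R) * 𝒜.T (adj n i) - 1 := by rw [hsq, hcomm, hqq]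
    _ = algebraMap R H (Qv R q + ((q⁻¹ : Rˣ) : R) - (q : R)) * 𝒜.T (adj n i) := by
        rw [map_sub, map_add]; noncomm_ring
    _ = 0 := by
        have hz : Qv R q + ((q⁻¹ : Rˣ) : R) - (q : R) = 0 := by unfold Qv; ring
        rw [hz, map_zero, zero_mul]

lemma desc_coeff (x : H) (cc : R)
    (hx : ∀ (i : ℕ) (h : i + 1 < n), x * (𝒜.T (adj n i) + algebraMap R H cc) = 0) :
    ∀ (u : Equiv.Perm (Fin n)) (i : ℕ) (h : i + 1 < n), u ⟨i + 1, h⟩ < u ⟨i, by omega⟩ →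
      𝒜.basis.repr x (u * adj n i) = -(Qv R q + cc) * 𝒜.basis.repr x u := by
  intro u i h hdesc
  have h0 := hx i h
  rw [mul_add, mul_algebraMap_eq] at h0
  have h1 := congrArg (fun y => 𝒜.basis.repr y u) h0
  simp only [map_add, map_smul, map_zero, Finsupp.add_apply, Finsupp.smul_apply, smul_eq_mul,
    Finsupp.coe_zero, Pi.zero_apply] at h1
  rw [repr_mul_T 𝒜 i h u, if_pos hdesc] at h1
  linear_combination h1

lemma coeff_gen (r : Equiv.Perm (Fin n) → R) (e : R)
    (hrev : r Fin.revPerm = 1)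
    (hstep : ∀ (u : Equiv.Perm (Fin n)) (i : ℕ) (h : i + 1 < n),
      u ⟨i + 1, h⟩ < u ⟨i, by omega⟩ → r (u * adj n i) = e * r u) :
    ∀ w, r w = e ^ (len (Fin.revPerm : Equiv.Perm (Fin n)) - len w) := by
  suffices hk : ∀ (k : ℕ) (w : Equiv.Perm (Fin n)),
      len (Fin.revPerm : Equiv.Perm (Fin n)) - len w ≤ k →
      r w = e ^ (len (Fin.revPerm : Equiv.Perm (Fin n)) - len w) from
    fun w => hk _ w le_rfl
  intro k
  induction k with
  | zero =>
    intro w hw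
    have hwr : w = Fin.revPerm := by
      by_contra hne
      have := len_lt_rev hne
      omega
    rw [hwr, hrev, Nat.sub_self, pow_zero]
  | succ k ihk =>
    intro w hw
    by_cases hne : w = Fin.revPerm
    · rw [hne, hrev, Nat.sub_self, pow_zero]
    · obtain ⟨i, h, hasc⟩ := exists_ascent hne
      have hdesc : (w * adj n i) ⟨i + 1, h⟩ < (w * adj n i) ⟨i, by omega⟩ := by
        simp only [Equiv.Perm.mul_apply]
        rw [adj_apply_fst h, adj_apply_snd h]
        exact hasc
      have hWW : (w * adj n i) * adj n i = w := by rw [mul_assoc, adj_mul_self, mul_one]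
      have hlen : len (w * adj n i) = len w + 1 := len_mul_adj h hasc
      have hle := len_le_rev (w * adj n i)
      have hltw := len_lt_rev hne
      have hr := hstep (w * adj n i) i h hdesc
      rw [hWW] at hr
      have ih' := ihk (w * adj n i) (by omega)
      rw [hr, ih', hlen]
      rw [show len (Fin.revPerm : Equiv.Perm (Fin n)) - len w
            = (len (Fin.revPerm : Equiv.Perm (Fin n)) - (len w + 1)) + 1 by omega]
      rw [pow_succ]
      ring

lemma inv_one_eq (inv : ℤ → R) (hinv : ∀ k : ℤ, k ≠ 0 → qint q k * inv k = 1) :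
    inv 1 = 1 := by
  have h := hinv 1 one_ne_zero
  have hq : qint q (1 : ℤ) = 1 := by norm_num [qint]
  rwa [hq, one_mul] at h

lemma inv_neg_one_eq (inv : ℤ → R) (hinv : ∀ k : ℤ, k ≠ 0 → qint q k * inv k = 1) :
    inv (-1) = -1 := by
  have h := hinv (-1) (by norm_num)
  have hq : qint q (-1 : ℤ) = -1 := by norm_num [qint]
  rw [hq] at h
  linear_combination -h

end AlgAux2

/-- For the maximal permutation `ω` of `S_n`,
`Y_ω^{[1,…,n]} = Σ_w (−q)^{ℓ(ω)−ℓ(w)} T_w` and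
`Y_ω^{[n,…,1]} = Σ_w q^{ℓ(w)−ℓ(ω)} T_w`. -/
theorem yangBaxter_maximal {n : ℕ} {R : Type} [CommRing R] {q : Rˣ} {H : Type}
    [Ring H] [Algebra R H] (𝒜 : HeckeAlgebra n R q H)
    (inv : ℤ → R) (hinv : ∀ k : ℤ, k ≠ 0 → qint q k * inv k = 1)
    (Y₁ Y₂ : Equiv.Perm (Fin n) → H)
    (hY₁ : IsYangBaxterFamily 𝒜 (fun p => (p : ℤ) + 1) inv Y₁)
    (hY₂ : IsYangBaxterFamily 𝒜 (fun p => (n : ℤ) - (p : ℤ)) inv Y₂) :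
    Y₁ (Fin.revPerm : Equiv.Perm (Fin n)) =
      ∑ w : Equiv.Perm (Fin n),
        (-(q : R)) ^ (len (Fin.revPerm : Equiv.Perm (Fin n)) - len w) • 𝒜.T w ∧
    Y₂ (Fin.revPerm : Equiv.Perm (Fin n)) =
      ∑ w : Equiv.Perm (Fin n),
        ((q ^ ((len w : ℤ) - (len (Fin.revPerm : Equiv.Perm (Fin n)) : ℤ)) : Rˣ) : R)
          • 𝒜.T w := by
  classical
  have hdesc : ∀ (i : ℕ) (h : i + 1 < n),
      (Fin.revPerm : Equiv.Perm (Fin n)) ⟨i + 1, h⟩ <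
        (Fin.revPerm : Equiv.Perm (Fin n)) ⟨i, by omega⟩ := by
    intro i h
    show (⟨i + 1, h⟩ : Fin n).rev < (⟨i, by omega⟩ : Fin n).rev
    exact Fin.rev_lt_rev.mpr (by simp [Fin.lt_def])
  have hWW : ∀ i : ℕ, ((Fin.revPerm : Equiv.Perm (Fin n)) * adj n i) * adj n i
      = (Fin.revPerm : Equiv.Perm (Fin n)) := by
    intro i
    rw [mul_assoc, adj_mul_self, mul_one]
  have e1 : ∀ (i : ℕ) (h : i + 1 < n),
      ((Fin.revPerm : Equiv.Perm (Fin n)) * adj n i) ⟨i + 1, h⟩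
        = (⟨i, by omega⟩ : Fin n).rev := by
    intro i h
    simp only [Equiv.Perm.mul_apply]
    rw [adj_apply_snd h]
    rfl
  have e2 : ∀ (i : ℕ) (h : i + 1 < n),
      ((Fin.revPerm : Equiv.Perm (Fin n)) * adj n i) ⟨i, by omega⟩
        = (⟨i + 1, h⟩ : Fin n).rev := by
    intro i h
    simp only [Equiv.Perm.mul_apply]
    rw [adj_apply_fst h]
    rfl
  constructor
  · -- first family
    have hr := repr_Y 𝒜 _ inv Y₁ hY₁
    have heig : ∀ (i : ℕ) (h : i + 1 < n),
        Y₁ (Fin.revPerm : Equiv.Perm (Fin n)) *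
          (𝒜.T (adj n i) + algebraMap R H ((q⁻¹ : Rˣ) : R)) = 0 := by
      intro i h
      have hlen' := len_mul_adj_desc h (hdesc i h)
      have hrec := hY₁.2 ((Fin.revPerm : Equiv.Perm (Fin n)) * adj n i) i h
        (by rw [hWW i]; omega)
      rw [hWW i] at hrec
      beta_reduce at hrec
      rw [e1 i h, e2 i h] at hrec
      have hk : ((((⟨i, by omega⟩ : Fin n).rev : ℤ) + 1)
          - ((((⟨i + 1, h⟩ : Fin n).rev) : ℤ) + 1)) = 1 := by
        have v1 : ((⟨i, by omega⟩ : Fin n).rev : ℕ) = n - (i + 1) := Fin.val_rev _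
        have v2 : ((⟨i + 1, h⟩ : Fin n).rev : ℕ) = n - (i + 1 + 1) := Fin.val_rev _
        omega
      rw [hk, inv_one_eq inv hinv, zpow_one, mul_one] at hrec
      rw [hrec, mul_assoc, factor_zero_left 𝒜 i h, mul_zero]
    have hstep := desc_coeff 𝒜 (Y₁ (Fin.revPerm : Equiv.Perm (Fin n))) ((q⁻¹ : Rˣ) : R) heig
    have he : -(Qv R q + ((q⁻¹ : Rˣ) : R)) = -(q : R) := by unfold Qv; ring
    have hco := coeff_gen (fun w => 𝒜.basis.repr (Y₁ (Fin.revPerm : Equiv.Perm (Fin n))) w)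
      (-(q : R)) ((hr (Fin.revPerm : Equiv.Perm (Fin n))).1)
      (fun u i h hd => by
        have h2 := hstep u i h hd
        rw [he] at h2
        exact h2)
    conv_lhs => rw [← 𝒜.basis.sum_equivFun (Y₁ (Fin.revPerm : Equiv.Perm (Fin n)))]
    refine Finset.sum_congr rfl fun w _ => ?_
    have hcow : 𝒜.basis.repr (Y₁ (Fin.revPerm : Equiv.Perm (Fin n))) w
        = (-(q : R)) ^ (len (Fin.revPerm : Equiv.Perm (Fin n)) - len w) := hco w
    rw [Module.Basis.equivFun_apply, hcow, 𝒜.basis_eq]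
  · -- second family
    have hr := repr_Y 𝒜 _ inv Y₂ hY₂
    have heig : ∀ (i : ℕ) (h : i + 1 < n),
        Y₂ (Fin.revPerm : Equiv.Perm (Fin n)) *
          (𝒜.T (adj n i) + algebraMap R H (-(q : R))) = 0 := by
      intro i h
      have hlen' := len_mul_adj_desc h (hdesc i h)
      have hrec := hY₂.2 ((Fin.revPerm : Equiv.Perm (Fin n)) * adj n i) i h
        (by rw [hWW i]; omega)
      rw [hWW i] at hrec
      beta_reduce at hrec
      rw [e1 i h, e2 i h] at hrec
      have hk : (((n : ℤ) - (((⟨i, by omega⟩ : Fin n).rev) : ℤ))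
          - ((n : ℤ) - (((⟨i + 1, h⟩ : Fin n).rev) : ℤ))) = -1 := by
        have v1 : ((⟨i, by omega⟩ : Fin n).rev : ℕ) = n - (i + 1) := Fin.val_rev _
        have v2 : ((⟨i + 1, h⟩ : Fin n).rev : ℕ) = n - (i + 1 + 1) := Fin.val_rev _
        omega
      rw [hk, inv_neg_one_eq inv hinv] at hrec
      have hsc : ((q ^ (-1 : ℤ) : Rˣ) : R) * (-1 : R) = -((q⁻¹ : Rˣ) : R) := by
        rw [zpow_neg_one]
        ring
      rw [hsc, map_neg, sub_neg_eq_add] at hrec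
      rw [map_neg, ← sub_eq_add_neg, hrec, mul_assoc, factor_zero_right 𝒜 i h, mul_zero]
    have hstep := desc_coeff 𝒜 (Y₂ (Fin.revPerm : Equiv.Perm (Fin n))) (-(q : R)) heig
    have he : -(Qv R q + (-(q : R))) = ((q⁻¹ : Rˣ) : R) := by unfold Qv; ring
    have hco := coeff_gen (fun w => 𝒜.basis.repr (Y₂ (Fin.revPerm : Equiv.Perm (Fin n))) w)
      (((q⁻¹ : Rˣ) : R)) ((hr (Fin.revPerm : Equiv.Perm (Fin n))).1)
      (fun u i h hd => by
        have h2 := hstep u i h hd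
        rw [he] at h2
        exact h2)
    have hexp : ∀ w : Equiv.Perm (Fin n),
        ((q ^ ((len w : ℤ) - (len (Fin.revPerm : Equiv.Perm (Fin n)) : ℤ)) : Rˣ) : R)
          = (((q⁻¹ : Rˣ) : R)) ^ (len (Fin.revPerm : Equiv.Perm (Fin n)) - len w) := by
      intro w
      have hle := len_le_rev w
      rw [show ((len w : ℤ) - (len (Fin.revPerm : Equiv.Perm (Fin n)) : ℤ))
          = -(((len (Fin.revPerm : Equiv.Perm (Fin n)) - len w : ℕ)) : ℤ) by omega]
      rw [zpow_neg, ← inv_zpow, zpow_natCast, Units.val_pow_eq_pow_val]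
    conv_lhs => rw [← 𝒜.basis.sum_equivFun (Y₂ (Fin.revPerm : Equiv.Perm (Fin n)))]
    refine Finset.sum_congr rfl fun w _ => ?_
    have hcow : 𝒜.basis.repr (Y₂ (Fin.revPerm : Equiv.Perm (Fin n))) w
        = (((q⁻¹ : Rˣ) : R)) ^ (len (Fin.revPerm : Equiv.Perm (Fin n)) - len w) := hco w
    rw [Module.Basis.equivFun_apply, hcow, 𝒜.basis_eq, hexp w]

end
end HeckePaper
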